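/- For z ∈ ℚZ[[λ]], the identity Ψ_f(1/(1−λz)) = 1/(1 − f_◊(λz)) holds, where for f(t) = c₁t + c₂t² + ⋯, f_◊(λz) := ∑_{i≥1} λⁱ cᵢ z^{◊i} and Ψ_f acts on words of length n by Ψ_f(w) = ∑_{I ∈ 𝒞(n)} c_{i₁}⋯c_{i_l} I[w]. -/

import Mathlib

/- STATEMENT 17: Ψ_f(1/(1−λz)) = 1/(1 − f_◊(λz)) for z ∈ ℚZ[[λ]]. A series
z = ∑_{j≥0} λʲ z_j ∈ ℚZ[[λ]] is modelled by its coefficient function `z : ℕ → ℚZ`.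
Both sides are power series in λ with coefficients in ℚ⟨Z⟩ and are compared
coefficientwise: `geomC g n` is the λⁿ-coefficient of 1/(1 − G) for
G = ∑_{i≥1} λⁱ g(i), computed via compositions; the λⁿ-coefficient of 1/(1−λz) is
`geomC (fun i => emb (z (i−1))) n`, and f_◊(λz) = ∑_i cᵢ (λz)^{◊i} has
λⁱ-coefficient ∑_{I ∈ 𝒞(i)} c_{l(I)} z_{i₁−1} ◊ ⋯ ◊ z_{i_l−1}. -/

/-- Noncommutative polynomials ℚ⟨Z⟩ on the alphabet Z = {z_m}, letters indexed by ℕ,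
with the ◊ product z_m ◊ z_n = z_{m+n}. Words are lists of indices. -/
abbrev QW := List ℕ →₀ ℚ

/-- The list of all compositions of `n` (lists of positive integers summing to `n`). -/
def comps : ℕ → List (List ℕ)
  | 0 => [[]]
  | n + 1 => (List.range (n + 1)).attach.flatMap fun k =>
      (comps k.1).map fun I => (n + 1 - k.1) :: I
  decreasing_by exact List.mem_range.mp k.2

/-- The action of a composition `I` on a word `w` of length `I.sum`: contract the
consecutive groups of letters of sizes `i₁, …, i_l` via `z_m ◊ z_n = z_{m+n}`. -/
def act : List ℕ → List ℕ → List ℕ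
  | [], _ => []
  | i :: I, w => (w.take i).sum :: act I (w.drop i)

/-- Hoffman's map `Ψ_f` associated to the coefficient sequence `c` of `f`:
on a word `w` of length `n`, `Ψ_f(w) = ∑_{I ∈ 𝒞(n)} c_{i₁}⋯c_{i_l} I[w]`. -/
noncomputable def Psi (c : ℕ → ℚ) (p : QW) : QW :=
  p.sum fun w r => r •
    ((comps w.length).map fun I =>
      ((I.map c).prod : ℚ) • (Finsupp.single (act I w) (1 : ℚ) : QW)).sum

/-- Concatenation product on ℚ⟨Z⟩. -/
noncomputable def concP (p q : QW) : QW :=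
  p.sum fun u r => q.sum fun v s => Finsupp.single (u ++ v) (r * s)

/-- The embedding ℚZ → ℚ⟨Z⟩ sending each letter to the corresponding length-one word. -/
noncomputable def emb (z : ℕ →₀ ℚ) : QW :=
  z.sum fun a r => Finsupp.single [a] r

/-- The ◊ product on ℚZ, extending z_a ◊ z_b = z_{a+b} bilinearly. -/
noncomputable def dmul (z w : ℕ →₀ ℚ) : ℕ →₀ ℚ :=
  z.sum fun a r => w.sum fun b s => Finsupp.single (a + b) (r * s)

/-- The ◊ product of a nonempty list of elements of ℚZ (zero on the empty list). -/
noncomputable def dList : List (ℕ →₀ ℚ) → (ℕ →₀ ℚ)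
  | [] => 0
  | [a] => a
  | a :: t => dmul a (dList t)

/-- `geomC g n` is the λⁿ-coefficient of the geometric series 1/(1 − G) in ℚ⟨Z⟩[[λ]],
where G = ∑_{i≥1} λⁱ g(i): it is ∑ over compositions (i₁,…,i_l) of n of the
concatenation product g(i₁)⋯g(i_l). -/
noncomputable def geomC (g : ℕ → QW) (n : ℕ) : QW :=
  ((comps n).map fun I => (I.map g).foldr concP (Finsupp.single [] 1)).sum

/-! ### Auxiliary development -/


lemma comps_zero : comps 0 = [[]] := by rw [comps]

lemma comps_succ (n : ℕ) : comps (n+1) = (List.range (n + 1)).flatMap fun k =>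
    (comps k).map fun I => (n + 1 - k) :: I := by
  rw [comps, ← List.attach_map_subtype_val (List.range (n+1)), List.flatMap_map]
  simp

lemma listsum_range {M : Type*} [AddCommMonoid M] (n : ℕ) (f : ℕ → M) :
    ((List.range n).map f).sum = ∑ k ∈ Finset.range n, f k := by
  induction n with
  | zero => simp
  | succ n ih => simp [List.range_succ, Finset.sum_range_succ, ih]

lemma listsum_flatMap {α β M : Type*} [AddCommMonoid M] (l : List α) (g : α → List β) (f : β → M) :
    ((l.flatMap g).map f).sum = (l.map fun a => ((g a).map f).sum).sum := by
  induction l with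
  | nil => simp
  | cons a t ih => simp [ih]

lemma triangle {M : Type*} [AddCommMonoid M] (n : ℕ) (F : ℕ → ℕ → M) :
    ∑ m ∈ Finset.range (n+1), ∑ t ∈ Finset.range (m+1), F m t
      = ∑ j ∈ Finset.range (n+1), ∑ t ∈ Finset.range (j+1), F (n - j + t) t := by
  induction n with
  | zero => simp
  | succ n ih =>
    rw [Finset.sum_range_succ, ih,
      Finset.sum_range_succ' (fun j => ∑ t ∈ Finset.range (j+1), F (n + 1 - j + t) t) (n+1)]
    have h1 : ∀ j ∈ Finset.range (n+1), (∑ t ∈ Finset.range (j+1+1), F (n + 1 - (j+1) + t) t)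
        = (∑ t ∈ Finset.range (j+1), F (n - j + t) t) + F (n+1) (j+1) := by
      intro j hj
      have hj' : j ≤ n := Nat.lt_succ_iff.mp (Finset.mem_range.mp hj)
      rw [Finset.sum_range_succ]
      congr 1
      · refine Finset.sum_congr rfl fun t _ => ?_
        congr 1
        omega
      · congr 1
        omega
    rw [Finset.sum_congr rfl h1, Finset.sum_add_distrib]
    have h2 : ∑ t ∈ Finset.range (n+1+1), F (n+1) t
        = (∑ j ∈ Finset.range (n+1), F (n+1) (j+1)) + F (n+1) 0 :=
      Finset.sum_range_succ' (fun t => F (n+1) t) (n+1)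
    rw [h2]
    simp only [Finset.sum_range_one, Nat.sub_zero, Nat.add_zero, zero_add, add_zero]
    abel

/-! ### emb -/

lemma emb_single (a : ℕ) (r : ℚ) : emb (Finsupp.single a r) = Finsupp.single [a] r := by
  simp [emb, Finsupp.sum_single_index]

lemma emb_zero : emb 0 = 0 := by simp [emb]

lemma emb_add (x y : ℕ →₀ ℚ) : emb (x + y) = emb x + emb y := by
  simp [emb, Finsupp.sum_add_index, Finsupp.single_add]

lemma emb_smul (r : ℚ) (x : ℕ →₀ ℚ) : emb (r • x) = r • emb x := by
  rw [emb, emb, Finsupp.sum_smul_index (by simp), Finsupp.smul_sum]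
  simp [Finsupp.smul_single]

noncomputable def embH : (ℕ →₀ ℚ) →+ QW := AddMonoidHom.mk' emb emb_add

/-! ### concP -/

lemma concP_single_single (u v : List ℕ) (r s : ℚ) :
    concP (Finsupp.single u r) (Finsupp.single v s) = Finsupp.single (u ++ v) (r * s) := by
  rw [concP, Finsupp.sum_single_index, Finsupp.sum_single_index] <;> simp [Finsupp.sum_single_index]

lemma concP_add_right (p q q' : QW) : concP p (q + q') = concP p q + concP p q' := by
  unfold concP
  rw [← Finsupp.sum_add]
  refine Finsupp.sum_congr fun u _ => ?_
  rw [Finsupp.sum_add_index] <;> simp [mul_add, Finsupp.single_add]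

lemma concP_add_left (p p' q : QW) : concP (p + p') q = concP p q + concP p' q := by
  unfold concP
  rw [Finsupp.sum_add_index] <;> simp [add_mul, Finsupp.single_add, Finsupp.sum_add]

lemma concP_zero_right (p : QW) : concP p 0 = 0 := by simp [concP]
lemma concP_zero_left (q : QW) : concP 0 q = 0 := by simp [concP]

lemma concP_smul_right (r : ℚ) (p q : QW) : concP p (r • q) = r • concP p q := by
  unfold concP
  rw [Finsupp.smul_sum]
  refine Finsupp.sum_congr fun u _ => ?_
  rw [Finsupp.sum_smul_index (by simp), Finsupp.smul_sum]
  refine Finsupp.sum_congr fun v _ => ?_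
  rw [Finsupp.smul_single', mul_left_comm]

lemma concP_smul_left (r : ℚ) (p q : QW) : concP (r • p) q = r • concP p q := by
  unfold concP
  rw [Finsupp.sum_smul_index (by simp), Finsupp.smul_sum]
  refine Finsupp.sum_congr fun u _ => ?_
  rw [Finsupp.smul_sum]
  refine Finsupp.sum_congr fun v _ => ?_
  rw [Finsupp.smul_single', mul_assoc]

lemma concP_one_right (p : QW) : concP p (Finsupp.single [] 1) = p := by
  unfold concP
  conv_rhs => rw [← p.sum_single]
  refine Finsupp.sum_congr fun u _ => ?_
  rw [Finsupp.sum_single_index (by simp), mul_one, List.append_nil]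

noncomputable def concRH (p : QW) : QW →+ QW := AddMonoidHom.mk' (concP p) (concP_add_right p)
noncomputable def concLH (q : QW) : QW →+ QW :=
  AddMonoidHom.mk' (fun p => concP p q) (fun p p' => concP_add_left p p' q)

lemma concP_listmapsum {α : Type*} (p : QW) (l : List α) (f : α → QW) :
    concP p ((l.map f).sum) = (l.map fun a => concP p (f a)).sum := by
  induction l with
  | nil => simp [concP_zero_right]
  | cons a t ih => simp [concP_add_right, ih]

/-! ### dmul, dList -/

lemma dmul_single_single (a b : ℕ) (r s : ℚ) :
    dmul (Finsupp.single a r) (Finsupp.single b s) = Finsupp.single (a + b) (r * s) := by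
  rw [dmul, Finsupp.sum_single_index, Finsupp.sum_single_index] <;> simp [Finsupp.sum_single_index]

lemma dmul_eq_mul (x y : ℕ →₀ ℚ) : AddMonoidAlgebra.ofCoeff (dmul x y)
    = AddMonoidAlgebra.ofCoeff x * AddMonoidAlgebra.ofCoeff y := by
  rw [AddMonoidAlgebra.mul_def, dmul]
  simp_rw [AddMonoidAlgebra.ofCoeff_finsuppSum, AddMonoidAlgebra.ofCoeff_single]

lemma dmul_assoc (x y w : ℕ →₀ ℚ) : dmul (dmul x y) w = dmul x (dmul y w) := by
  apply AddMonoidAlgebra.ofCoeff_injective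
  rw [dmul_eq_mul, dmul_eq_mul, dmul_eq_mul, dmul_eq_mul]
  exact mul_assoc (G := AddMonoidAlgebra ℚ ℕ) _ _ _

lemma dmul_add_right (x y y' : ℕ →₀ ℚ) : dmul x (y + y') = dmul x y + dmul x y' := by
  unfold dmul
  rw [← Finsupp.sum_add]
  refine Finsupp.sum_congr fun a _ => ?_
  rw [Finsupp.sum_add_index] <;> simp [mul_add, Finsupp.single_add]

lemma dmul_add_left (x x' y : ℕ →₀ ℚ) : dmul (x + x') y = dmul x y + dmul x' y := by
  unfold dmul
  rw [Finsupp.sum_add_index] <;> simp [add_mul, Finsupp.single_add, Finsupp.sum_add]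

lemma dmul_zero_right (x : ℕ →₀ ℚ) : dmul x 0 = 0 := by simp [dmul]
lemma dmul_zero_left (y : ℕ →₀ ℚ) : dmul 0 y = 0 := by simp [dmul]

lemma dList_merge (x y : ℕ →₀ ℚ) (t : List (ℕ →₀ ℚ)) :
    dList (x :: y :: t) = dList (dmul x y :: t) := by
  cases t with
  | nil => rfl
  | cons u t' =>
    show dmul x (dList (y :: u :: t')) = dmul (dmul x y) (dList (u :: t'))
    rw [show dList (y :: u :: t') = dmul y (dList (u :: t')) from rfl, dmul_assoc]

/-! ### Pw, Rw : word-level Psi -/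

section
variable (c : ℕ → ℚ)

noncomputable def Pw (w : List ℕ) : QW :=
  ((comps w.length).map fun I =>
    ((I.map c).prod : ℚ) • (Finsupp.single (act I w) (1 : ℚ) : QW)).sum

noncomputable def Rw (k a : ℕ) (w : List ℕ) : QW :=
  ∑ j ∈ Finset.range (w.length + 1),
    c (j + k) • concP (Finsupp.single [a + (w.take j).sum] (1:ℚ)) (Pw c (w.drop j))

lemma Pw_nil : Pw c [] = Finsupp.single [] 1 := by simp [Pw, comps_zero, act]

lemma Rw_nil (k a : ℕ) : Rw c k a [] = c k • Finsupp.single [a] 1 := by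
  simp [Rw, Pw_nil, concP_single_single]

lemma Rw_cons (k a b : ℕ) (w : List ℕ) :
    Rw c k a (b :: w) = c k • concP (Finsupp.single [a] 1) (Pw c (b :: w))
      + Rw c (k+1) (a+b) w := by
  have h : ∀ j : ℕ, j + 1 + k = j + (k + 1) := by omega
  rw [Rw, show (b::w).length + 1 = (w.length + 1) + 1 from rfl, Finset.sum_range_succ']
  rw [add_comm]
  congr 1
  · simp
  · refine Finset.sum_congr rfl fun j _ => ?_
    simp [h, add_assoc]

lemma innerSumL (m : ℕ) (u : List ℕ) (hu : u.length = m) (d : ℚ) (x : ℕ) :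
    ((comps m).map fun I =>
        (d * (I.map c).prod) • Finsupp.single (x :: act I u) (1:ℚ)).sum
      = d • concP (Finsupp.single [x] (1:ℚ)) (Pw c u) := by
  rw [Pw, hu, concP_listmapsum, List.smul_sum, List.map_map]
  refine congrArg List.sum (List.map_congr_left fun I _ => ?_)
  simp only [Function.comp, concP_smul_right, concP_single_single, smul_smul, one_mul]
  rfl

lemma P_cons (s : ℕ) (w : List ℕ) : Pw c (s :: w) = Rw c 1 s w := by
  have key : Pw c (s :: w) = ∑ k ∈ Finset.range (w.length + 1),
      c (w.length + 1 - k) • concP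
        (Finsupp.single [s + (w.take (w.length - k)).sum] (1:ℚ))
        (Pw c (w.drop (w.length - k))) := by
    rw [Pw, show (s::w).length = w.length + 1 from rfl, comps_succ, listsum_flatMap,
      listsum_range]
    refine Finset.sum_congr rfl fun k hk => ?_
    have hk' : k ≤ w.length := by simpa using Nat.lt_succ_iff.mp (Finset.mem_range.mp hk)
    have h1 : w.length + 1 - k = (w.length - k) + 1 := by omega
    rw [List.map_map]
    have : ∀ I : List ℕ, ((((w.length + 1 - k) :: I).map c).prod : ℚ) •
        (Finsupp.single (act ((w.length + 1 - k) :: I) (s :: w)) (1:ℚ) : QW)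
        = (c (w.length + 1 - k) * (I.map c).prod) •
          Finsupp.single ((s + (w.take (w.length - k)).sum) :: act I (w.drop (w.length - k))) (1:ℚ) := by
      intro I
      rw [h1]
      simp [act, List.take_succ_cons, List.drop_succ_cons]
    rw [show ((comps k).map ((fun I => ((I.map c).prod : ℚ) •
        (Finsupp.single (act I (s :: w)) (1:ℚ) : QW)) ∘ fun I => (w.length + 1 - k) :: I))
        = (comps k).map fun I => (c (w.length + 1 - k) * (I.map c).prod) •
          Finsupp.single ((s + (w.take (w.length - k)).sum) :: act I (w.drop (w.length - k))) (1:ℚ)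
      from List.map_congr_left fun I _ => this I]
    rw [innerSumL c k (w.drop (w.length - k)) (by simp; omega)]
  rw [key, Rw]
  have := Finset.sum_range_reflect (fun j => c (j + 1) • concP
      (Finsupp.single [s + (w.take j).sum] (1:ℚ)) (Pw c (w.drop j))) (w.length + 1)
  rw [← this]
  refine Finset.sum_congr rfl fun k hk => ?_
  have hk' : k ≤ w.length := by simpa using Nat.lt_succ_iff.mp (Finset.mem_range.mp hk)
  have h2 : w.length + 1 - 1 - k = w.length - k := by omega
  have h3 : w.length - k + 1 = w.length + 1 - k := by omega
  rw [h2, h3]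

/-! ### Psi basic lemmas -/

lemma Psi_single (w : List ℕ) (r : ℚ) : Psi c (Finsupp.single w r) = r • Pw c w := by
  rw [Psi, Finsupp.sum_single_index (by simp)]
  rfl

lemma Psi_add (p q : QW) : Psi c (p + q) = Psi c p + Psi c q :=
  Finsupp.sum_add_index' (by simp) (by intros; rw [add_smul])

noncomputable def psiH : QW →+ QW := AddMonoidHom.mk' (Psi c) (Psi_add c)

lemma Psi_zero : Psi c 0 = 0 := by simp [Psi]

/-! ### Phi -/

noncomputable def Phi (k : ℕ) (y : ℕ →₀ ℚ) (p : QW) : QW :=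
  y.sum fun a r => p.sum fun w t => (r * t) • Rw c k a w

lemma Phi_single_single (k a : ℕ) (r : ℚ) (w : List ℕ) (t : ℚ) :
    Phi c k (Finsupp.single a r) (Finsupp.single w t) = (r * t) • Rw c k a w := by
  rw [Phi, Finsupp.sum_single_index (by simp), Finsupp.sum_single_index (by simp)]

lemma Phi_add_right (k : ℕ) (y : ℕ →₀ ℚ) (p q : QW) :
    Phi c k y (p + q) = Phi c k y p + Phi c k y q := by
  unfold Phi
  rw [← Finsupp.sum_add]
  refine Finsupp.sum_congr fun a _ => ?_
  rw [Finsupp.sum_add_index' (by simp) (by intros; rw [mul_add, add_smul])]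

lemma Phi_add_left (k : ℕ) (y y' : ℕ →₀ ℚ) (p : QW) :
    Phi c k (y + y') p = Phi c k y p + Phi c k y' p := by
  unfold Phi
  rw [Finsupp.sum_add_index' (by simp) (by intros; simp [add_mul, add_smul, Finsupp.sum_add])]

lemma Phi_zero_right (k : ℕ) (y : ℕ →₀ ℚ) : Phi c k y 0 = 0 := by simp [Phi]
lemma Phi_zero_left (k : ℕ) (p : QW) : Phi c k 0 p = 0 := by simp [Phi]

noncomputable def phiH (k : ℕ) (y : ℕ →₀ ℚ) : QW →+ QW :=
  AddMonoidHom.mk' (Phi c k y) (Phi_add_right c k y)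

/-! ### the key exchange lemmas -/

lemma Psi_concP_emb (y : ℕ →₀ ℚ) (p : QW) :
    Psi c (concP (emb y) p) = Phi c 1 y p := by
  induction y using Finsupp.induction_linear with
  | zero => rw [emb_zero, concP_zero_left, Psi_zero, Phi_zero_left]
  | add f g hf hg => rw [emb_add, concP_add_left, Psi_add, Phi_add_left, hf, hg]
  | single a r =>
    induction p using Finsupp.induction_linear with
    | zero => rw [concP_zero_right, Psi_zero, Phi_zero_right]
    | add f g hf hg => rw [concP_add_right, Psi_add, Phi_add_right, hf, hg]
    | single w t =>
      rw [emb_single, concP_single_single, Psi_single, Phi_single_single,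
        show [a] ++ w = a :: w from rfl, P_cons]

lemma Phi_concP_emb (k : ℕ) (y y' : ℕ →₀ ℚ) (p : QW) :
    Phi c k y (concP (emb y') p)
      = c k • concP (emb y) (Phi c 1 y' p) + Phi c (k+1) (dmul y y') p := by
  induction y using Finsupp.induction_linear with
  | zero => rw [Phi_zero_left, emb_zero, concP_zero_left, dmul_zero_left, Phi_zero_left,
      smul_zero, add_zero]
  | add f g hf hg =>
    rw [Phi_add_left, hf, hg, emb_add, concP_add_left, dmul_add_left, Phi_add_left, smul_add]
    abel
  | single a r =>
    induction y' using Finsupp.induction_linear with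
    | zero =>
      simp only [emb_zero, concP_zero_left, concP_zero_right, dmul_zero_right,
        Phi_zero_right, Phi_zero_left, smul_zero, add_zero]
    | add f g hf hg =>
      rw [emb_add, concP_add_left, Phi_add_right, hf, hg, Phi_add_left, dmul_add_right,
        Phi_add_left, concP_add_right, smul_add]
      abel
    | single b u =>
      induction p using Finsupp.induction_linear with
      | zero => rw [concP_zero_right, Phi_zero_right, Phi_zero_right, Phi_zero_right,
          concP_zero_right, smul_zero, add_zero]
      | add f g hf hg =>
        rw [concP_add_right, Phi_add_right, hf, hg, Phi_add_right, Phi_add_right,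
          concP_add_right, smul_add]
        abel
      | single w t =>
        rw [emb_single, concP_single_single, Phi_single_single,
          show [b] ++ w = b :: w from rfl, Rw_cons, Phi_single_single,
          dmul_single_single, Phi_single_single, P_cons]
        rw [smul_add]
        congr 1
        · rw [emb_single, concP_smul_right,
            show (Finsupp.single [a] r : QW) = r • Finsupp.single [a] (1:ℚ) from by
              rw [Finsupp.smul_single', mul_one],
            concP_smul_left, smul_smul, smul_smul, smul_smul]
          congr 1
          ring
        · congr 1
          ring

lemma Phi_one (k : ℕ) (y : ℕ →₀ ℚ) :
    Phi c k y (Finsupp.single [] 1) = c k • emb y := by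
  induction y using Finsupp.induction_linear with
  | zero => rw [Phi_zero_left, emb_zero, smul_zero]
  | add f g hf hg => rw [Phi_add_left, hf, hg, emb_add, smul_add]
  | single a r =>
    rw [Phi_single_single, Rw_nil, emb_single, mul_one, smul_smul,
      Finsupp.smul_single', Finsupp.smul_single', mul_one]
    congr 1
    ring

end

/-! ### Finset-sum homomorphism helpers -/

lemma concP_sum_right {α : Type*} (p : QW) (s : Finset α) (f : α → QW) :
    concP p (∑ a ∈ s, f a) = ∑ a ∈ s, concP p (f a) := map_sum (concRH p) f s

lemma concP_sum_left {α : Type*} (q : QW) (s : Finset α) (f : α → QW) :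
    concP (∑ a ∈ s, f a) q = ∑ a ∈ s, concP (f a) q := map_sum (concLH q) f s

lemma emb_sum {α : Type*} (s : Finset α) (f : α → (ℕ →₀ ℚ)) :
    emb (∑ a ∈ s, f a) = ∑ a ∈ s, emb (f a) := map_sum embH f s

section
variable (c : ℕ → ℚ) (z : ℕ → (ℕ →₀ ℚ))

lemma Psi_sum {α : Type*} (s : Finset α) (f : α → QW) :
    Psi c (∑ a ∈ s, f a) = ∑ a ∈ s, Psi c (f a) := map_sum (psiH c) f s

lemma Phi_sum_right {α : Type*} (k : ℕ) (y : ℕ →₀ ℚ) (s : Finset α) (f : α → QW) :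
    Phi c k y (∑ a ∈ s, f a) = ∑ a ∈ s, Phi c k y (f a) := map_sum (phiH c k y) f s

/-! ### hh and hp -/

noncomputable def hh (i : ℕ) : ℕ →₀ ℚ :=
  ((comps i).map fun I => c I.length • dList (I.map fun j => z (j - 1))).sum

noncomputable def hp (k : ℕ) (y : ℕ →₀ ℚ) (m : ℕ) : ℕ →₀ ℚ :=
  ((comps m).map fun K => c (K.length + k) • dList (y :: K.map fun j => z (j - 1))).sum

lemma hp_zero (k : ℕ) (y : ℕ →₀ ℚ) : hp c z k y 0 = c k • y := by
  simp [hp, comps_zero, dList]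

lemma hp_succ (k : ℕ) (y : ℕ →₀ ℚ) (j : ℕ) : hp c z k y (j+1)
    = ∑ t ∈ Finset.range (j+1), hp c z (k+1) (dmul y (z ((j + 1 - t) - 1))) t := by
  rw [hp, comps_succ, listsum_flatMap, listsum_range]
  refine Finset.sum_congr rfl fun t ht => ?_
  rw [hp, List.map_map]
  refine congrArg List.sum (List.map_congr_left fun K _ => ?_)
  simp only [Function.comp, List.map_cons, List.length_cons]
  rw [dList_merge]
  have : K.length + 1 + k = K.length + (k + 1) := by omega
  rw [this]

lemma hh_succ (i : ℕ) : hh c z (i+1)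
    = ∑ t ∈ Finset.range (i+1), hp c z 1 (z ((i + 1 - t) - 1)) t := by
  rw [hh, comps_succ, listsum_flatMap, listsum_range]
  refine Finset.sum_congr rfl fun t ht => ?_
  rw [hp, List.map_map]
  refine congrArg List.sum (List.map_congr_left fun K _ => ?_)
  simp only [Function.comp, List.map_cons, List.length_cons]

/-! ### geomC recursion -/

lemma geomC_zero (g : ℕ → QW) : geomC g 0 = Finsupp.single [] 1 := by
  simp [geomC, comps_zero]

lemma geomC_succ (g : ℕ → QW) (n : ℕ) :
    geomC g (n+1) = ∑ k ∈ Finset.range (n+1), concP (g (n+1-k)) (geomC g k) := by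
  rw [geomC, comps_succ, listsum_flatMap, listsum_range]
  refine Finset.sum_congr rfl fun k _ => ?_
  rw [geomC, concP_listmapsum, List.map_map]
  rfl

/-! ### main induction -/

lemma main_aux (n : ℕ) :
    Psi c (geomC (fun i => emb (z (i - 1))) n) = geomC (fun i => emb (hh c z i)) n ∧
    ∀ k y, Phi c k y (geomC (fun i => emb (z (i - 1))) n)
      = ∑ m ∈ Finset.range (n+1),
          concP (emb (hp c z k y m)) (geomC (fun i => emb (hh c z i)) (n - m)) := by
  induction n using Nat.strong_induction_on with
  | _ n ih =>
  set GG := geomC (fun i => emb (z (i - 1))) with hGG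
  set RR := geomC (fun i => emb (hh c z i)) with hRR
  cases n with
  | zero =>
    constructor
    · rw [hGG, hRR, geomC_zero, geomC_zero, Psi_single, Pw_nil, one_smul]
    · intro k y
      rw [hGG, geomC_zero, Phi_one, Finset.sum_range_one, Nat.sub_zero, hp_zero,
        emb_smul, concP_smul_left, hRR, geomC_zero, concP_one_right]
  | succ n' =>
    have hsum : ∑ m ∈ Finset.range (n'+1),
        Phi c 1 (z ((n'+1-m) - 1)) (GG m) = Psi c (GG (n'+1)) := by
      rw [hGG, geomC_succ, Psi_sum]
      exact Finset.sum_congr rfl fun m _ => (Psi_concP_emb c _ _).symm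
    have hP1 : Psi c (GG (n'+1)) = RR (n'+1) := by
      rw [← hsum]
      have e1 : ∀ m ∈ Finset.range (n'+1), Phi c 1 (z ((n'+1-m) - 1)) (GG m)
          = ∑ t ∈ Finset.range (m+1),
              concP (emb (hp c z 1 (z ((n'+1-m) - 1)) t)) (RR (m - t)) := by
        intro m hm
        exact (ih m (Finset.mem_range.mp hm)).2 1 (z ((n'+1-m) - 1))
      rw [Finset.sum_congr rfl e1,
        triangle n' (fun m t => concP (emb (hp c z 1 (z ((n'+1-m) - 1)) t)) (RR (m - t)))]
      rw [hRR, geomC_succ,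
        ← Finset.sum_range_reflect
          (fun j => concP (emb (hh c z (n'+1-j))) (geomC (fun i => emb (hh c z i)) j)) (n'+1)]
      refine Finset.sum_congr rfl fun j hj => ?_
      have hj' : j ≤ n' := Nat.lt_succ_iff.mp (Finset.mem_range.mp hj)
      rw [show n' + 1 - 1 - j = n' - j from by omega,
        show n' + 1 - (n' - j) = j + 1 from by omega, hh_succ, emb_sum, concP_sum_left]
      refine Finset.sum_congr rfl fun t ht => ?_
      have ht' : t ≤ j := Nat.lt_succ_iff.mp (Finset.mem_range.mp ht)
      rw [show n' + 1 - (n' - j + t) = j + 1 - t from by omega,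
        show n' - j + t - t = n' - j from by omega]
    refine ⟨hP1, fun k y => ?_⟩
    rw [hGG, geomC_succ, Phi_sum_right]
    have e2 : ∀ m ∈ Finset.range (n'+1),
        Phi c k y (concP (emb (z ((n'+1-m) - 1))) (geomC (fun i => emb (z (i - 1))) m))
          = c k • concP (emb y) (Phi c 1 (z ((n'+1-m) - 1)) (GG m))
            + Phi c (k+1) (dmul y (z ((n'+1-m) - 1))) (GG m) := by
      intro m _
      exact Phi_concP_emb c k y _ _
    rw [Finset.sum_congr rfl e2, Finset.sum_add_distrib]
    have hS1 : ∑ m ∈ Finset.range (n'+1),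
        c k • concP (emb y) (Phi c 1 (z ((n'+1-m) - 1)) (GG m))
        = c k • concP (emb y) (RR (n'+1)) := by
      rw [← Finset.smul_sum, ← concP_sum_right, hsum, hP1]
    have hS2 : ∑ m ∈ Finset.range (n'+1), Phi c (k+1) (dmul y (z ((n'+1-m) - 1))) (GG m)
        = ∑ j ∈ Finset.range (n'+1), ∑ t ∈ Finset.range (j+1),
            concP (emb (hp c z (k+1) (dmul y (z ((j+1-t) - 1))) t)) (RR (n' - j)) := by
      have e3 : ∀ m ∈ Finset.range (n'+1), Phi c (k+1) (dmul y (z ((n'+1-m) - 1))) (GG m)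
          = ∑ t ∈ Finset.range (m+1),
              concP (emb (hp c z (k+1) (dmul y (z ((n'+1-m) - 1))) t)) (RR (m - t)) := by
        intro m hm
        exact (ih m (Finset.mem_range.mp hm)).2 (k+1) _
      rw [Finset.sum_congr rfl e3,
        triangle n' (fun m t =>
          concP (emb (hp c z (k+1) (dmul y (z ((n'+1-m) - 1))) t)) (RR (m - t)))]
      refine Finset.sum_congr rfl fun j hj => ?_
      have hj' : j ≤ n' := Nat.lt_succ_iff.mp (Finset.mem_range.mp hj)
      refine Finset.sum_congr rfl fun t ht => ?_
      have ht' : t ≤ j := Nat.lt_succ_iff.mp (Finset.mem_range.mp ht)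
      rw [show n' + 1 - (n' - j + t) = j + 1 - t from by omega,
        show n' - j + t - t = n' - j from by omega]
    rw [hS1, hS2,
      Finset.sum_range_succ' (fun m => concP (emb (hp c z k y m)) (RR (n' + 1 - m))) (n'+1),
      add_comm (c k • concP (emb y) (RR (n'+1)))]
    congr 1
    · refine Finset.sum_congr rfl fun j hj => ?_
      rw [show n' + 1 - (j + 1) = n' - j from by omega, hp_succ, emb_sum, concP_sum_left]
    · rw [Nat.sub_zero, hp_zero, emb_smul, concP_smul_left]

end


theorem Psi_geometric_series (c : ℕ → ℚ) (z : ℕ → (ℕ →₀ ℚ)) :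
    ∀ n : ℕ, Psi c (geomC (fun i => emb (z (i - 1))) n) =
      geomC (fun i => emb
        (((comps i).map fun I => c I.length • dList (I.map fun j => z (j - 1))).sum)) n :=
  fun n => (main_aux c z n).1
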